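/- 𝔟 ≤ add(Menger) ≤ cf(𝔡): the additivity number of Menger's property is at least the bounding number 𝔟 and at most the cofinality of the dominating number 𝔡. -/

import Mathlib

open Filter

abbrev Baire : Type := ℕ → ℕ

/-- g ≤* f : eventually g n ≤ f n. -/
def EvLE (g f : ℕ → ℕ) : Prop := ∀ᶠ n in atTop, g n ≤ f n

/-- D is dominating in Baire space. -/
def Dominating (D : Set Baire) : Prop := ∀ g : Baire, ∃ f ∈ D, EvLE g f

/-- next_a(n) = min {k ∈ a : n < k}. -/
noncomputable def NextFn (a : Set ℕ) (n : ℕ) : ℕ := sInf {k ∈ a | n < k}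

/-- a is an almost subset of b: a \ b is finite. -/
def AlmostSubset (a b : Set ℕ) : Prop := (a \ b).Finite

/-- a/h = {n : a ∩ [h n, h (n+1)) ≠ ∅}. -/
def quotBy (a : Set ℕ) (h : ℕ → ℕ) : Set ℕ :=
  {n | (a ∩ Set.Ico (h n) (h (n + 1))).Nonempty}

/-- G ⊆ [ℕ]^∞ is groupwise dense: it contains all infinite almost-subsets of its
members, and for every partition of ℕ into consecutive finite intervals there is an
infinite set of intervals whose union belongs to G. -/
def GroupwiseDense (G : Set (Set ℕ)) : Prop :=
  (∀ b ∈ G, ∀ a : Set ℕ, a.Infinite → AlmostSubset a b → a ∈ G) ∧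
  ∀ h : ℕ → ℕ, StrictMono h → h 0 = 0 →
    ∃ b : Set ℕ, b.Infinite ∧ (⋃ n ∈ b, Set.Ico (h n) (h (n + 1))) ∈ G

/-- `X` has Menger's property: for each sequence of open covers there are finite
subfamilies whose union covers `X`. -/
def Menger (X : Type*) [TopologicalSpace X] : Prop :=
  ∀ U : ℕ → Set (Set X),
    (∀ n, ∀ s ∈ U n, IsOpen s) → (∀ n, ⋃₀ U n = Set.univ) →
    ∃ F : ℕ → Finset (Set X), (∀ n, ↑(F n) ⊆ U n) ∧
      (⋃ n, ⋃₀ ((F n : Set (Set X)))) = Set.univ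

/-- The unbounding number 𝔟. -/
noncomputable def bNum : Cardinal :=
  sInf {c : Cardinal | ∃ B : Set Baire, Cardinal.mk B = c ∧
    ∀ g : Baire, ∃ f ∈ B, ¬ EvLE f g}

/-- The dominating number 𝔡. -/
noncomputable def dNum : Cardinal :=
  sInf {c : Cardinal | ∃ D : Set Baire, Cardinal.mk D = c ∧ Dominating D}

/-- add(Menger): the least cardinality of a family of Menger subspaces of a
separable zero-dimensional metrizable space whose union is not Menger. -/
noncomputable def addMenger : Cardinal :=
  sInf {c : Cardinal | ∃ (X : Type) (t : TopologicalSpace X),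
    @TopologicalSpace.SeparableSpace X t ∧ @TopologicalSpace.MetrizableSpace X t ∧
    (∃ B : Set (Set X), @TopologicalSpace.IsTopologicalBasis X t B ∧
      ∀ s ∈ B, @IsClopen X t s) ∧
    ∃ 𝒜 : Set (Set X), Cardinal.mk 𝒜 = c ∧
      (∀ A ∈ 𝒜, @Menger A (TopologicalSpace.induced Subtype.val t)) ∧
      ¬ @Menger (⋃₀ 𝒜) (TopologicalSpace.induced Subtype.val t)}

section Auxiliary

open Cardinal

lemma menger_seq {Z : Type*} [TopologicalSpace Z] (hM : Menger Z) (v : ℕ → ℕ → Set Z)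
    (hv : ∀ n k, IsOpen (v n k)) (hc : ∀ n, (⋃ k, v n k) = Set.univ) :
    ∃ φ : ℕ → ℕ, ∀ x : Z, ∃ n, ∃ k < φ n, x ∈ v n k := by
  classical
  obtain ⟨F, hF, hFc⟩ := hM (fun n => Set.range (v n))
    (fun n s hs => by obtain ⟨k, rfl⟩ := hs; exact hv n k)
    (fun n => by rw [Set.sUnion_range]; exact hc n)
  refine ⟨fun n => (F n).sup (fun s => if h : ∃ k, v n k = s then h.choose + 1 else 0),
    fun x => ?_⟩
  have hx : x ∈ ⋃ n, ⋃₀ ((F n : Set (Set Z))) := by rw [hFc]; trivial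
  obtain ⟨n, s, hsF, hxs⟩ : ∃ n, ∃ s ∈ (F n : Set (Set Z)), x ∈ s := by
    simpa [Set.mem_iUnion, Set.mem_sUnion] using hx
  have hs : ∃ k, v n k = s := hF n hsF
  refine ⟨n, hs.choose, ?_, by rw [hs.choose_spec]; exact hxs⟩
  have hle := Finset.le_sup (f := fun s => if h : ∃ k, v n k = s then h.choose + 1 else 0)
    (Finset.mem_coe.mp hsF)
  simp only [dif_pos hs] at hle
  simpa using lt_of_lt_of_le (Nat.lt_succ_self hs.choose) hle

lemma menger_seq' {Z : Type*} [TopologicalSpace Z] (hM : Menger Z) (v : ℕ → ℕ → Set Z)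
    (hv : ∀ n k, IsOpen (v n k)) (hc : ∀ n, (⋃ k, v n k) = Set.univ) :
    ∃ φ : ℕ → ℕ, ∀ x : Z, ∀ j, ∃ n, j ≤ n ∧ ∃ k < φ n, x ∈ v n k := by
  have H : ∀ j : ℕ, ∃ ψ : ℕ → ℕ, ∀ x : Z, ∃ m, ∃ k < ψ m, x ∈ v (m + j) k := fun j =>
    menger_seq hM (fun m k => v (m + j) k) (fun m k => hv _ _) (fun m => hc _)
  choose Φ hΦ using H
  refine ⟨fun n => (Finset.range (n + 1)).sup (fun j => Φ j (n - j)), fun x j => ?_⟩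
  obtain ⟨m, k, hk, hx⟩ := hΦ j x
  refine ⟨m + j, Nat.le_add_left _ _, k, ?_, hx⟩
  have h2 : Φ j m = Φ j (m + j - j) := by congr 1; omega
  exact lt_of_lt_of_le (h2 ▸ hk) (Finset.le_sup (Finset.mem_range.2 (by omega)))

lemma cover_enum {Z : Type*} [TopologicalSpace Z] [SecondCountableTopology Z]
    [Nonempty Z] (U : Set (Set Z)) (ho : ∀ s ∈ U, IsOpen s) (hc : ⋃₀ U = Set.univ) :
    ∃ u : ℕ → Set Z, (∀ k, u k ∈ U) ∧ (⋃ k, u k) = Set.univ := by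
  obtain ⟨T, hTc, hTU, hT⟩ := TopologicalSpace.isOpen_sUnion_countable U ho
  rw [hc] at hT
  have hTne : T.Nonempty := by
    rcases Set.eq_empty_or_nonempty T with h | h
    · exfalso
      rw [h, Set.sUnion_empty] at hT
      exact (Set.univ_nonempty (α := Z)).ne_empty hT.symm
    · exact h
  obtain ⟨u, hu⟩ := hTc.exists_eq_range hTne
  refine ⟨u, fun k => hTU (by rw [hu]; exact Set.mem_range_self k), ?_⟩
  rw [← Set.sUnion_range, ← hu, hT]

lemma dominating_univ : Dominating Set.univ := fun g =>
  ⟨g, Set.mem_univ g, Eventually.of_forall (fun _ => le_rfl)⟩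

lemma dNum_le_of_dominating {D : Set Baire} (hD : Dominating D) : dNum ≤ Cardinal.mk D :=
  csInf_le' ⟨D, rfl, hD⟩

lemma infinite_of_dominating {D : Set Baire} (hD : Dominating D) : ℵ₀ ≤ Cardinal.mk D := by
  by_contra hle
  rw [not_le] at hle
  have hfin : D.Finite := Cardinal.lt_aleph0_iff_set_finite.mp hle
  obtain ⟨f, hf, hev⟩ := hD (fun n => (hfin.toFinset.sup (fun f : Baire => f n)) + 1)
  obtain ⟨N, hN⟩ := eventually_atTop.mp hev
  have h1 : f N ≤ hfin.toFinset.sup (fun f : Baire => f N) :=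
    Finset.le_sup (f := fun f : Baire => f N) (hfin.mem_toFinset.2 hf)
  have h2 : (hfin.toFinset.sup (fun f : Baire => f N)) + 1 ≤ f N := hN N le_rfl
  exact Nat.not_succ_le_self _ (h2.trans h1)

lemma aleph0_le_dNum : ℵ₀ ≤ dNum := by
  refine le_csInf ⟨Cardinal.mk (Set.univ : Set Baire), Set.univ, rfl, dominating_univ⟩ ?_
  rintro c ⟨D, rfl, hD⟩
  exact infinite_of_dominating hD

lemma exists_bound_of_small {G : Set Baire} (h : Cardinal.mk G < dNum) :
    ∃ g : Baire, ∀ f ∈ G, ¬ EvLE g f := by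
  by_contra hc
  push_neg at hc
  exact absurd (dNum_le_of_dominating (fun g => hc g)) (not_le.mpr h)

lemma exists_dom_of_small {B : Set Baire} (h : Cardinal.mk B < bNum) :
    ∃ g : Baire, ∀ f ∈ B, EvLE f g := by
  by_contra hc
  push_neg at hc
  exact absurd (csInf_le' (s := {c : Cardinal | ∃ B : Set Baire, Cardinal.mk B = c ∧
    ∀ g : Baire, ∃ f ∈ B, ¬ EvLE f g}) ⟨B, rfl, fun g => hc g⟩) (not_le.mpr h)

lemma exists_strong_dom : ∃ D : Set Baire, Cardinal.mk D = dNum ∧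
    ∀ g : Baire, ∃ f ∈ D, ∀ n, g n ≤ f n := by
  have hne : {c : Cardinal | ∃ D : Set Baire, Cardinal.mk D = c ∧ Dominating D}.Nonempty :=
    ⟨Cardinal.mk (Set.univ : Set Baire), Set.univ, rfl, dominating_univ⟩
  obtain ⟨D₀, hD₀, hdom⟩ : ∃ D : Set Baire, Cardinal.mk D = dNum ∧ Dominating D := csInf_mem hne
  refine ⟨Set.range (fun p : ↥D₀ × ℕ => fun n => p.1.val n + p.2), ?_, ?_⟩
  · apply le_antisymm
    · refine le_trans Cardinal.mk_range_le ?_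
      rw [Cardinal.mk_prod, Cardinal.lift_id, Cardinal.lift_id, hD₀, Cardinal.mk_nat,
        Cardinal.mul_eq_max (aleph0_le_dNum) le_rfl]
      exact max_le le_rfl aleph0_le_dNum
    · apply dNum_le_of_dominating
      intro g
      obtain ⟨f, hf, hev⟩ := hdom g
      exact ⟨fun n => f n + 0, ⟨(⟨f, hf⟩, 0), rfl⟩, by simpa using hev⟩
  · intro g
    obtain ⟨f, hf, hev⟩ := hdom g
    obtain ⟨N, hN⟩ := eventually_atTop.mp hev
    refine ⟨fun n => f n + (Finset.range N).sup g, ⟨(⟨f, hf⟩, _), rfl⟩, fun n => ?_⟩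
    rcases lt_or_ge n N with h | h
    · exact le_trans (Finset.le_sup (Finset.mem_range.2 h)) (Nat.le_add_left _ _)
    · exact le_trans (hN n h) (Nat.le_add_right _ _)

lemma menger_of_small {Z : Type} [TopologicalSpace Z] [SecondCountableTopology Z]
    (h : Cardinal.mk Z < dNum) : Menger Z := by
  classical
  intro U hUo hUc
  rcases isEmpty_or_nonempty Z with hE | hNe
  · refine ⟨fun _ => ∅, fun n => by simp, ?_⟩
    ext x
    exact (IsEmpty.false x).elim
  · choose u hu1 hu2 using fun n => cover_enum (U n) (hUo n) (hUc n)
    have hgch : ∀ x : Z, ∃ gx : Baire, ∀ n, x ∈ u n (gx n) := by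
      intro x
      refine ⟨fun n => sInf {k | x ∈ u n k}, fun n => ?_⟩
      have hxm : x ∈ ⋃ k, u n k := by rw [hu2 n]; trivial
      have hne' : {k | x ∈ u n k}.Nonempty := Set.mem_iUnion.mp hxm
      exact Nat.sInf_mem hne'
    choose g hgmem using hgch
    have hcard : Cardinal.mk (Set.range g) < dNum := lt_of_le_of_lt Cardinal.mk_range_le h
    obtain ⟨h₀, hh₀⟩ := exists_bound_of_small hcard
    refine ⟨fun n => (Finset.range (h₀ n)).image (u n), fun n s hs => ?_, ?_⟩
    · simp only [Finset.coe_image, Set.mem_image, Finset.mem_coe, Finset.mem_range] at hs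
      obtain ⟨k, -, rfl⟩ := hs
      exact hu1 n k
    · apply Set.eq_univ_of_forall
      intro x
      have hne := hh₀ (g x) ⟨x, rfl⟩
      rw [EvLE, not_eventually] at hne
      obtain ⟨n, hn⟩ := hne.exists
      push_neg at hn
      refine Set.mem_iUnion.2 ⟨n, ⟨u n (g x n), ?_, hgmem x n⟩⟩
      simp only [Finset.coe_image, Set.mem_image, Finset.mem_coe, Finset.mem_range]
      exact ⟨g x n, hn, rfl⟩

lemma not_menger_of_strong_dom {D : Set Baire}
    (hD : ∀ g : Baire, ∃ f ∈ D, ∀ n, g n ≤ f n) :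
    ¬ Menger ↥D := by
  intro hM
  have hv : ∀ n k : ℕ, IsOpen {x : ↥D | x.val n ≤ k} := by
    intro n k
    have hcont : Continuous (fun x : ↥D => x.val n) :=
      (continuous_apply n).comp continuous_subtype_val
    exact (isOpen_discrete (Set.Iic k)).preimage hcont
  obtain ⟨φ, hφ⟩ := menger_seq hM (fun n k => {x : ↥D | x.val n ≤ k}) hv (fun n => by
    apply Set.eq_univ_of_forall
    intro x
    refine Set.mem_iUnion.2 ⟨x.val n, ?_⟩
    show x.val n ≤ x.val n
    exact le_rfl)
  obtain ⟨f, hf, hff⟩ := hD φ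
  obtain ⟨n, k, hk, hx⟩ := hφ ⟨f, hf⟩
  have : φ n < φ n := lt_of_le_of_lt ((hff n).trans hx) hk
  exact lt_irrefl _ this

lemma bNum_le_part {X : Type} {t : TopologicalSpace X}
    (hsep : @TopologicalSpace.SeparableSpace X t) (hmet : @TopologicalSpace.MetrizableSpace X t)
    (𝒜 : Set (Set X))
    (hMeng : ∀ A ∈ 𝒜, @Menger A (TopologicalSpace.induced Subtype.val t))
    (hlt : Cardinal.mk 𝒜 < bNum) :
    @Menger (⋃₀ 𝒜) (TopologicalSpace.induced Subtype.val t) := by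
  classical
  letI := t
  haveI := hsep
  haveI := hmet
  haveI : SecondCountableTopology X := by
    letI := TopologicalSpace.pseudoMetrizableSpacePseudoMetric X
    exact UniformSpace.secondCountable_of_separable X
  show Menger ↥(⋃₀ 𝒜)
  intro U hUo hUc
  rcases isEmpty_or_nonempty ↥(⋃₀ 𝒜) with hE | hNe
  · refine ⟨fun _ => ∅, fun n => by simp, ?_⟩
    ext x
    exact (IsEmpty.false x).elim
  choose u hu1 hu2 using fun n => cover_enum (U n) (hUo n) (hUc n)
  have hsub : ∀ A : ↥𝒜, (A : Set X) ⊆ ⋃₀ 𝒜 := fun A => Set.subset_sUnion_of_mem A.2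
  have key : ∀ A : ↥𝒜, ∃ φ : ℕ → ℕ, ∀ x : ↥(A : Set X), ∀ j : ℕ,
      ∃ n, j ≤ n ∧ ∃ k < φ n, Set.inclusion (hsub A) x ∈ u n k := by
    intro A
    have hMA : Menger ↥(A : Set X) := hMeng A A.2
    exact menger_seq' hMA (fun n k => Set.inclusion (hsub A) ⁻¹' u n k)
      (fun n k => ((hUo n _ (hu1 n k)).preimage (continuous_inclusion (hsub A))))
      (fun n => by
        apply Set.eq_univ_of_forall
        intro x
        have hxm : Set.inclusion (hsub A) x ∈ ⋃ k, u n k := by rw [hu2 n]; trivial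
        obtain ⟨k, hk⟩ := Set.mem_iUnion.mp hxm
        exact Set.mem_iUnion.2 ⟨k, hk⟩)
  choose φ hφ using key
  have hcard : Cardinal.mk (Set.range φ) < bNum := lt_of_le_of_lt Cardinal.mk_range_le hlt
  obtain ⟨g, hgB⟩ := exists_dom_of_small hcard
  refine ⟨fun n => (Finset.range (g n)).image (u n), fun n s hs => ?_, ?_⟩
  · simp only [Finset.coe_image, Set.mem_image, Finset.mem_coe, Finset.mem_range] at hs
    obtain ⟨k, -, rfl⟩ := hs
    exact hu1 n k
  · apply Set.eq_univ_of_forall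
    intro x
    obtain ⟨A₀, hA₀, hxA⟩ := x.2
    obtain ⟨N, hN⟩ := eventually_atTop.mp (hgB (φ ⟨A₀, hA₀⟩) ⟨⟨A₀, hA₀⟩, rfl⟩)
    obtain ⟨n, hjn, k, hk, hx⟩ := hφ ⟨A₀, hA₀⟩ ⟨x.1, hxA⟩ N
    have hincl : Set.inclusion (hsub ⟨A₀, hA₀⟩) (⟨x.1, hxA⟩ : ↥A₀) = x := Subtype.ext rfl
    rw [hincl] at hx
    refine Set.mem_iUnion.2 ⟨n, ⟨u n k, ?_, hx⟩⟩
    simp only [Finset.coe_image, Set.mem_image, Finset.mem_coe, Finset.mem_range]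
    exact ⟨k, lt_of_lt_of_le hk (hN n hjn), rfl⟩

end Auxiliary

/-- 𝔟 ≤ add(Menger) ≤ cf(𝔡). -/
theorem stmt_18 : bNum ≤ addMenger ∧ addMenger ≤ (Cardinal.ord dNum).cof := by
  classical
  obtain ⟨D, hDcard, hDdom⟩ := exists_strong_dom
  have hmk : Cardinal.mk ↥D = Cardinal.mk (Cardinal.ord dNum).ToType := by
    rw [hDcard, Cardinal.mk_ord_toType]
  obtain ⟨e⟩ := Cardinal.eq.mp hmk
  obtain ⟨S, hSub, hScard⟩ :=
    Order.exists_cof_eq (Cardinal.ord dNum).ToType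
  rw [Ordinal.cof_toType] at hScard
  set A : (Cardinal.ord dNum).ToType → Set Baire :=
    fun s => (fun d : ↥D => d.val) '' {d : ↥D | e d ≤ s} with hA
  have hAD : ∀ s, A s ⊆ D := by
    rintro s x ⟨d, -, rfl⟩
    exact d.2
  have hAsmall : ∀ s, Cardinal.mk (A s) < dNum := by
    intro s
    have h1 : Cardinal.mk (A s) ≤ Cardinal.mk {d : ↥D | e d ≤ s} := Cardinal.mk_image_le
    have h2 : Cardinal.mk {d : ↥D | e d ≤ s} ≤ Cardinal.mk (Set.Iic s) := by
      refine Cardinal.mk_le_of_injective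
        (f := fun d : ↥{d : ↥D | e d ≤ s} => (⟨e d.1, d.2⟩ : ↥(Set.Iic s))) ?_
      intro a b hab
      have : e a.1 = e b.1 := congrArg Subtype.val hab
      exact Subtype.ext (e.injective this)
    have h3 : Cardinal.mk (Set.Iic s) ≤ Cardinal.mk (Set.Iio s) + 1 := by
      rw [← Set.Iio_insert]
      exact Cardinal.mk_insert_le
    have h4 : Cardinal.mk (Set.Iio s) < dNum := Cardinal.mk_Iio_ord_toType s
    have h5 : (1 : Cardinal) < dNum := lt_of_lt_of_le Cardinal.one_lt_aleph0 aleph0_le_dNum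
    exact lt_of_le_of_lt (h1.trans (h2.trans h3)) (Cardinal.add_lt_of_lt aleph0_le_dNum h4 h5)
  have hUnion : ⋃₀ (A '' S) = D := by
    apply Set.eq_of_subset_of_subset
    · rintro x ⟨As, ⟨s, -, rfl⟩, hx⟩
      exact hAD s hx
    · intro x hx
      obtain ⟨s, hsS, hns⟩ := hSub (e ⟨x, hx⟩)
      exact ⟨A s, ⟨s, hsS, rfl⟩, ⟨⟨x, hx⟩, hns, rfl⟩⟩
  have hwitness : Cardinal.mk ↥(A '' S) ∈ {c : Cardinal | ∃ (X : Type) (t : TopologicalSpace X),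
      @TopologicalSpace.SeparableSpace X t ∧ @TopologicalSpace.MetrizableSpace X t ∧
      (∃ B : Set (Set X), @TopologicalSpace.IsTopologicalBasis X t B ∧
        ∀ s ∈ B, @IsClopen X t s) ∧
      ∃ 𝒜 : Set (Set X), Cardinal.mk 𝒜 = Cardinal.mk ↥(A '' S) ∧
        (∀ A' ∈ 𝒜, @Menger A' (TopologicalSpace.induced Subtype.val t)) ∧
        ¬ @Menger (⋃₀ 𝒜) (TopologicalSpace.induced Subtype.val t)} := by
    refine ⟨Baire, inferInstance, inferInstance, inferInstance, ?_, A '' S, rfl, ?_, ?_⟩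
    · refine ⟨_, isTopologicalBasis_pi
        (fun _ : ℕ => TopologicalSpace.isTopologicalBasis_opens), ?_⟩
      rintro s ⟨Ufun, F, -, rfl⟩
      exact ⟨isClosed_set_pi (fun a _ => isClosed_discrete _),
        isOpen_set_pi F.finite_toSet (fun a _ => isOpen_discrete _)⟩
    · rintro A' ⟨s, -, rfl⟩
      exact menger_of_small (hAsmall s)
    · rw [hUnion]
      exact not_menger_of_strong_dom hDdom
  have hle2 : addMenger ≤ (Cardinal.ord dNum).cof := by
    refine le_trans (csInf_le' hwitness) ?_
    calc Cardinal.mk ↥(A '' S) ≤ Cardinal.mk ↥S := Cardinal.mk_image_le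
    _ = (Cardinal.ord dNum).cof := hScard
  refine ⟨?_, hle2⟩
  refine le_csInf ⟨_, hwitness⟩ ?_
  rintro c ⟨X, t, hsep, hmet, -, 𝒜, rfl, hM, hnM⟩
  by_contra hlt
  exact hnM (bNum_le_part hsep hmet 𝒜 hM (not_le.mp hlt))
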